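/- Suppose there exist n₀ ∈ N and B < ∞ such that for all measures ν in the model, n₀ (ψ(μ) - ψ(ν))² / ((d(μ,ν)+1)^{n₀} - 1) ≤ B. Then for every ε > 0, sup over {ν : d(μ,ν) > ε} of n(ψ(μ)-ψ(ν))²/((d(μ,ν)+1)^n - 1) tends to 0 as n → ∞. In fact, for n large enough, this supremum is at most (nB/n₀)·((ε+1)^{n₀} - 1)/((ε+1)^n - 1). -/

import Mathlib

open MeasureTheory Filter

open Classical in
/-- The quadratic divergence `d(μ,ν)`: `∫ (1 - dν/dμ)² dμ` if `ν ≪ μ` with square-integrable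
density, `+∞` otherwise. -/
noncomputable def qdiv {X : Type*} [MeasurableSpace X] (μ ν : Measure X) : ENNReal :=
  if ν ≪ μ ∧ MemLp (fun x => (ν.rnDeriv μ x).toReal) 2 μ then
    ENNReal.ofReal (∫ x, (1 - (ν.rnDeriv μ x).toReal) ^ 2 ∂μ)
  else ⊤

/-- The finite-sample efficiency functional
`H_ψ^n(μ,ν) = n(ψ(μ) - ψ(ν))²/((d(μ,ν)+1)^n - 1)` (equal to `0` if `d(μ,ν) = ∞`,
by the Lean convention `x / 0 = 0` and `(⊤ : ℝ≥0∞).toReal = 0`). -/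
noncomputable def Hfun {X : Type*} [MeasurableSpace X] (ψ : Measure X → ℝ)
    (μ ν : Measure X) (n : ℕ) : ℝ :=
  n * (ψ μ - ψ ν) ^ 2 / (((qdiv μ ν + 1) ^ n - 1).toReal)

open Finset in
theorem geom_sum_ratio_mono_aux (a b : ℝ) (h1 : 1 ≤ a) (hab : a ≤ b) {n₀ n : ℕ} (h : n₀ ≤ n) :
    (∑ j ∈ range n₀, b ^ j) * (∑ i ∈ range n, a ^ i) ≤
    (∑ j ∈ range n₀, a ^ j) * (∑ i ∈ range n, b ^ i) := by
  have ha0 : (0:ℝ) ≤ a := by linarith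
  have hb0 : (0:ℝ) ≤ b := by linarith
  rw [← Finset.sum_range_add_sum_Ico (a ^ ·) h, ← Finset.sum_range_add_sum_Ico (b ^ ·) h,
    mul_add, mul_add]
  have hcross : (∑ j ∈ range n₀, b ^ j) * (∑ i ∈ Ico n₀ n, a ^ i) ≤
      (∑ j ∈ range n₀, a ^ j) * (∑ i ∈ Ico n₀ n, b ^ i) := by
    rw [Finset.sum_mul_sum, Finset.sum_mul_sum]
    refine Finset.sum_le_sum fun j hj => Finset.sum_le_sum fun i hi => ?_
    have hji : j ≤ i := le_trans (Finset.mem_range.mp hj).le (Finset.mem_Ico.mp hi).1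
    obtain ⟨k, rfl⟩ := Nat.exists_eq_add_of_le hji
    calc b ^ j * a ^ (j + k) = (a ^ j * b ^ j) * a ^ k := by rw [pow_add]; ring
      _ ≤ (a ^ j * b ^ j) * b ^ k :=
          mul_le_mul_of_nonneg_left (pow_le_pow_left₀ ha0 hab k)
            (mul_nonneg (pow_nonneg ha0 _) (pow_nonneg hb0 _))
      _ = a ^ j * b ^ (j + k) := by rw [pow_add]; ring
  nlinarith [hcross, mul_comm (∑ j ∈ range n₀, b ^ j) (∑ i ∈ range n₀, a ^ i)]

/-- The ratio `(x^{n₀}-1)/(x^n-1)` is antitone in `x ≥ 1` when `n₀ ≤ n`, in cross-multiplied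
form. -/
theorem H_key_ineq (a b : ℝ) (h1 : 1 ≤ a) (hab : a ≤ b) {n₀ n : ℕ} (h : n₀ ≤ n) :
    (b ^ n₀ - 1) * (a ^ n - 1) ≤ (a ^ n₀ - 1) * (b ^ n - 1) := by
  rw [← geom_sum_mul, ← geom_sum_mul, ← geom_sum_mul, ← geom_sum_mul]
  have hc := geom_sum_ratio_mono_aux a b h1 hab h
  have h2 : (0:ℝ) ≤ (a - 1) * (b - 1) := mul_nonneg (by linarith) (by linarith)
  nlinarith [mul_le_mul_of_nonneg_right hc h2]

theorem Hfun_nonneg {X : Type*} [MeasurableSpace X] (ψ : Measure X → ℝ)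
    (μ ν : Measure X) (n : ℕ) : 0 ≤ Hfun ψ μ ν n :=
  div_nonneg (mul_nonneg (Nat.cast_nonneg _) (sq_nonneg _)) ENNReal.toReal_nonneg

theorem Hfun_denom {X : Type*} [MeasurableSpace X] (μ ν : Measure X) (hd : qdiv μ ν ≠ ⊤)
    (m : ℕ) : ((qdiv μ ν + 1) ^ m - 1).toReal = ((qdiv μ ν).toReal + 1) ^ m - 1 := by
  have h1 : qdiv μ ν + 1 ≠ ⊤ := by simp [hd]
  have hle : (1 : ENNReal) ≤ (qdiv μ ν + 1) ^ m := one_le_pow_of_one_le' le_add_self m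
  rw [ENNReal.toReal_sub_of_le hle (ENNReal.pow_ne_top h1), ENNReal.toReal_pow,
    ENNReal.toReal_add hd ENNReal.one_ne_top, ENNReal.toReal_one]

/-- Uniform convergence of `H_ψ^n` to `0` away from `μ` (Lemma 3): if
`H_ψ^{n₀}(μ,ν) ≤ B` for all `ν` in the model `P`, then for every `ε > 0` the supremum of
`H_ψ^n(μ,ν)` over `{ν ∈ P : d(μ,ν) > ε}` tends to `0`; indeed for `n` large it is bounded by
`(n B / n₀) ((ε+1)^{n₀} - 1)/((ε+1)^n - 1)`. -/
theorem H_uniform_convergence {X : Type*} [MeasurableSpace X]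
    (P : Set (Measure X)) (ψ : Measure X → ℝ) (μ : Measure X)
    (n₀ : ℕ) (hn₀ : 1 ≤ n₀) (B : ℝ)
    (hB : ∀ ν ∈ P, Hfun ψ μ ν n₀ ≤ B) (ε : ℝ) (hε : 0 < ε) :
    (∃ N : ℕ, ∀ n ≥ N, ∀ ν ∈ P, ENNReal.ofReal ε < qdiv μ ν →
        Hfun ψ μ ν n ≤ (n * B / n₀) * (((ε + 1) ^ n₀ - 1) / ((ε + 1) ^ n - 1))) ∧
      (∀ δ : ℝ, 0 < δ → ∃ N : ℕ, ∀ n ≥ N, ∀ ν ∈ P, ENNReal.ofReal ε < qdiv μ ν →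
        Hfun ψ μ ν n ≤ δ) := by
  have ha1 : (1:ℝ) < ε + 1 := by linarith
  have hE : ∀ m : ℕ, 1 ≤ m → (0:ℝ) < (ε + 1) ^ m - 1 := fun m hm =>
    sub_pos.2 (one_lt_pow₀ ha1 (by omega))
  -- main bound, valid for all `n ≥ n₀`
  have main : ∀ n, n₀ ≤ n → ∀ ν ∈ P, ENNReal.ofReal ε < qdiv μ ν →
      Hfun ψ μ ν n ≤ (n * B / n₀) * (((ε + 1) ^ n₀ - 1) / ((ε + 1) ^ n - 1)) := by
    intro n hn ν hν hqd
    have hn1 : 1 ≤ n := le_trans hn₀ hn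
    have hB0 : 0 ≤ B := le_trans (Hfun_nonneg ψ μ ν n₀) (hB ν hν)
    have hcoef : 0 ≤ (n:ℝ) * B / n₀ :=
      div_nonneg (mul_nonneg (Nat.cast_nonneg _) hB0) (Nat.cast_nonneg _)
    by_cases hd : qdiv μ ν = ⊤
    · have hz : Hfun ψ μ ν n = 0 := by
        simp [Hfun, hd, top_add, ENNReal.top_pow (by omega : n ≠ 0)]
      rw [hz]
      exact mul_nonneg hcoef (div_nonneg (sub_nonneg.2 (one_le_pow₀ ha1.le)) (hE n hn1).le)
    · set t : ℝ := (qdiv μ ν).toReal with htdef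
      have ht : ε < t := by
        rwa [ENNReal.ofReal_lt_iff_lt_toReal hε.le hd] at hqd
      have hb1 : (1:ℝ) < t + 1 := by linarith
      have hab : ε + 1 ≤ t + 1 := by linarith
      have hD : ∀ m : ℕ, 1 ≤ m → (0:ℝ) < (t + 1) ^ m - 1 := fun m hm =>
        sub_pos.2 (one_lt_pow₀ hb1 (by omega))
      set q : ℝ := (ψ μ - ψ ν) ^ 2 with hqdef
      have hH : ∀ m : ℕ, Hfun ψ μ ν m = m * q / ((t + 1) ^ m - 1) := by
        intro m; rw [Hfun, Hfun_denom μ ν hd m]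
      have hn₀pos : (0:ℝ) < n₀ := by exact_mod_cast hn₀
      -- bound on q from hB
      have hq : q ≤ B * ((t + 1) ^ n₀ - 1) / n₀ := by
        have h1 := hB ν hν
        rw [hH n₀, div_le_iff₀ (hD n₀ hn₀)] at h1
        rw [le_div_iff₀ hn₀pos]
        nlinarith [h1]
      calc Hfun ψ μ ν n = (n:ℝ) * q / ((t + 1) ^ n - 1) := hH n
        _ ≤ (n:ℝ) * (B * ((t + 1) ^ n₀ - 1) / n₀) / ((t + 1) ^ n - 1) := by
            exact (div_le_div_iff_of_pos_right (hD n hn1)).mpr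
              (mul_le_mul_of_nonneg_left hq (Nat.cast_nonneg _))
        _ = ((n:ℝ) * B / n₀) * (((t + 1) ^ n₀ - 1) / ((t + 1) ^ n - 1)) := by ring
        _ ≤ ((n:ℝ) * B / n₀) * (((ε + 1) ^ n₀ - 1) / ((ε + 1) ^ n - 1)) := by
            refine mul_le_mul_of_nonneg_left ?_ hcoef
            rw [div_le_div_iff₀ (hD n hn1) (hE n hn1)]
            exact H_key_ineq (ε + 1) (t + 1) ha1.le hab hn
  refine ⟨⟨n₀, fun n hn => main n hn⟩, ?_⟩
  -- part 2: the explicit bound tends to 0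
  intro δ hδ
  set B' : ℝ := max B 0 with hB'def
  set C : ℝ := B' * ((ε + 1) ^ n₀ - 1) / n₀ with hCdef
  have hC0 : 0 ≤ C := div_nonneg (mul_nonneg (le_max_right B 0)
    (sub_nonneg.2 (one_le_pow₀ ha1.le))) (Nat.cast_nonneg _)
  have htend : Tendsto (fun n : ℕ => 2 * C * ((n:ℝ) / (ε + 1) ^ n)) atTop (nhds 0) := by
    have := (tendsto_pow_const_div_const_pow_of_one_lt 1 ha1).const_mul (2 * C)
    simpa using this
  have hev1 : ∀ᶠ n : ℕ in atTop, 2 * C * ((n:ℝ) / (ε + 1) ^ n) < δ :=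
    htend.eventually (gt_mem_nhds hδ)
  have hev2 : ∀ᶠ n : ℕ in atTop, (2:ℝ) ≤ (ε + 1) ^ n :=
    (tendsto_pow_atTop_atTop_of_one_lt ha1).eventually_ge_atTop 2
  obtain ⟨N, hN⟩ := ((hev1.and hev2).and (eventually_ge_atTop n₀)).exists_forall_of_atTop
  refine ⟨N, fun n hn ν hν hqd => ?_⟩
  obtain ⟨⟨h1, h2⟩, h3⟩ := hN n hn
  have hn1 : 1 ≤ n := le_trans hn₀ h3
  refine le_trans (main n h3 ν hν hqd) ?_
  have hB0 : 0 ≤ B := le_trans (Hfun_nonneg ψ μ ν n₀) (hB ν hν)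
  have hn₀pos : (0:ℝ) < n₀ := by exact_mod_cast hn₀
  have hEpos := hE n hn1
  have step1 : (n:ℝ) * B / n₀ * (((ε + 1) ^ n₀ - 1) / ((ε + 1) ^ n - 1)) =
      C * ((n:ℝ) / ((ε + 1) ^ n - 1)) := by
    rw [hCdef, hB'def, max_eq_left hB0]; ring
  rw [step1]
  have step2 : (n:ℝ) / ((ε + 1) ^ n - 1) ≤ 2 * ((n:ℝ) / (ε + 1) ^ n) := by
    rw [mul_div_assoc', div_le_div_iff₀ hEpos (by positivity)]
    have hn0 : (0:ℝ) ≤ (n:ℝ) := Nat.cast_nonneg _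
    nlinarith [h2]
  calc C * ((n:ℝ) / ((ε + 1) ^ n - 1)) ≤ C * (2 * ((n:ℝ) / (ε + 1) ^ n)) :=
        mul_le_mul_of_nonneg_left step2 hC0
    _ = 2 * C * ((n:ℝ) / (ε + 1) ^ n) := by ring
    _ ≤ δ := h1.le
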